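/- arXiv:1807.00045 — 2 statements merged into one kernel-verified Lean document; each statement's English description precedes it below -/
import Mathlib

section
/- Let UΔ = V Σ Wᵀ Δ be a core SVD of UΔ : ℝ^s_Δ → ℝ^m_M with Vᵀ M V = I and Wᵀ Δ W = I, where V ∈ ℝ^{m×k}, W ∈ ℝ^{s×k}, Σ ∈ ℝ^{k×k} diagonal with positive entries. Let c ∈ ℝ^m, δ > 0, define h = c − V Vᵀ M c, p = ‖h‖_M, and assume p > 0. Let Q = [[Σ, δ^{1/2} Vᵀ M c],[0, δ^{1/2} p]] ∈ ℝ^{(k+1)×(k+1)}, and suppose Q = V_Q Σ_Q W_Qᵀ with V_Qᵀ V_Q = I, W_Qᵀ W_Q = I, Σ_Q diagonal positive. Then [U c] Δ_new = V_new Σ_Q W_newᵀ Δ_new, where Δ_new = diag(Δ, δ), V_new = [V, h/p] V_Q satisfies V_newᵀ M V_new = I, and W_new = [[W, 0],[0, δ^{-1/2}]] W_Q satisfies W_newᵀ Δ_new W_new = I. -/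
open scoped Matrix

/-- cf. Theorem 4.1: exact incremental update of the core SVD
`U D = V S Wᵀ D` (with `D = Δ = diag(δ_1,…,δ_s)`, `Vᵀ M V = I`, `Wᵀ D W = I`,
`S = Σ` diagonal positive) when a new column `c` and a new time step `δ > 0` are added.
With `h = c − V Vᵀ M c`, `p = ‖h‖_M > 0`,
`Q = [[S, δ^{1/2} Vᵀ M c],[0, δ^{1/2} p]] = V_Q S_Q W_Qᵀ` a standard core SVD,
the updated factorization is `[U c] D_new = V_new S_Q W_newᵀ D_new` with
`V_new = [V, h/p] V_Q` `M`-orthonormal and `W_new = [[W,0],[0,δ^{-1/2}]] W_Q`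
`D_new`-orthonormal, where `D_new = diag(D, δ)`. -/
theorem incremental_svd_exact_update {m s k : ℕ}
    (M : Matrix (Fin m) (Fin m) ℝ) (hMsymm : M.IsSymm) (hMpd : M.PosDef)
    (d : Fin s → ℝ) (hd : ∀ i, 0 < d i)
    (D : Matrix (Fin s) (Fin s) ℝ) (hD : D = Matrix.diagonal d)
    (U : Matrix (Fin m) (Fin s) ℝ)
    (V : Matrix (Fin m) (Fin k) ℝ) (W : Matrix (Fin s) (Fin k) ℝ)
    (S : Matrix (Fin k) (Fin k) ℝ)
    (hSdiag : ∃ σ : Fin k → ℝ, (∀ i, 0 < σ i) ∧ S = Matrix.diagonal σ)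
    (hSVD : U * D = V * S * Wᵀ * D) (hV : Vᵀ * M * V = 1) (hW : Wᵀ * D * W = 1)
    (c : Fin m → ℝ) (δ : ℝ) (hδ : 0 < δ)
    (h : Fin m → ℝ) (hh : h = c - V *ᵥ (Vᵀ *ᵥ (M *ᵥ c)))
    (p : ℝ) (hp : p = Real.sqrt (h ⬝ᵥ M *ᵥ h)) (hppos : 0 < p)
    (Q : Matrix (Fin k ⊕ Unit) (Fin k ⊕ Unit) ℝ)
    (hQ : Q = Matrix.fromBlocks S
      (Matrix.replicateCol Unit (Real.sqrt δ • (Vᵀ *ᵥ (M *ᵥ c)))) 0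
      ((Real.sqrt δ * p) • 1))
    (VQ SQ WQ : Matrix (Fin k ⊕ Unit) (Fin k ⊕ Unit) ℝ)
    (hQsvd : Q = VQ * SQ * WQᵀ)
    (hVQ : VQᵀ * VQ = 1) (hWQ : WQᵀ * WQ = 1)
    (hSQdiag : ∃ σ : Fin k ⊕ Unit → ℝ, (∀ i, 0 < σ i) ∧ SQ = Matrix.diagonal σ)
    (Unew : Matrix (Fin m) (Fin s ⊕ Unit) ℝ)
    (hUnew : Unew = Matrix.fromCols U (Matrix.replicateCol Unit c))
    (Dnew : Matrix (Fin s ⊕ Unit) (Fin s ⊕ Unit) ℝ)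
    (hDnew : Dnew = Matrix.fromBlocks D 0 0 (δ • 1))
    (Vnew : Matrix (Fin m) (Fin k ⊕ Unit) ℝ)
    (hVnew : Vnew = Matrix.fromCols V (Matrix.replicateCol Unit (p⁻¹ • h)) * VQ)
    (Wnew : Matrix (Fin s ⊕ Unit) (Fin k ⊕ Unit) ℝ)
    (hWnew : Wnew = Matrix.fromBlocks W 0 0 ((Real.sqrt δ)⁻¹ • 1) * WQ) :
    Unew * Dnew = Vnew * SQ * Wnewᵀ * Dnew ∧
    Vnewᵀ * M * Vnew = 1 ∧
    Wnewᵀ * Dnew * Wnew = 1 := by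
  have hsd : Real.sqrt δ * Real.sqrt δ = δ := Real.mul_self_sqrt hδ.le
  have hsdpos : 0 < Real.sqrt δ := Real.sqrt_pos.mpr hδ
  have hMt : Mᵀ = M := hMsymm
  set A : Matrix (Fin m) (Fin k ⊕ Unit) ℝ :=
    Matrix.fromCols V (Matrix.replicateCol Unit (p⁻¹ • h)) with hAdef
  set B : Matrix (Fin s ⊕ Unit) (Fin k ⊕ Unit) ℝ :=
    Matrix.fromBlocks W 0 0 ((Real.sqrt δ)⁻¹ • (1 : Matrix Unit Unit ℝ)) with hBdef
  -- orthogonality of h to the range of V (in the M inner product)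
  have collapse : ∀ x : Fin k → ℝ, Vᵀ *ᵥ (M *ᵥ (V *ᵥ x)) = x := by
    intro x
    rw [Matrix.mulVec_mulVec, Matrix.mulVec_mulVec, hV, Matrix.one_mulVec]
  have horth : Vᵀ *ᵥ (M *ᵥ h) = 0 := by
    rw [hh, Matrix.mulVec_sub, Matrix.mulVec_sub, collapse, sub_self]
  -- norm of h
  have hMhnn : 0 ≤ h ⬝ᵥ M *ᵥ h := by
    have := hMpd.posSemidef.dotProduct_mulVec_nonneg h
    simpa using this
  have hhMh : h ⬝ᵥ M *ᵥ h = p * p := by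
    rw [hp, Real.mul_self_sqrt hMhnn]
  -- M-orthonormality of A
  have hAMA : Aᵀ * M * A = 1 := by
    rw [hAdef, Matrix.transpose_fromCols, Matrix.transpose_replicateCol, Matrix.fromRows_mul,
      Matrix.fromRows_mul_fromCols]
    have h12 : Vᵀ * M * Matrix.replicateCol Unit (p⁻¹ • h) = 0 := by
      rw [Matrix.mul_assoc, ← Matrix.replicateCol_mulVec, ← Matrix.replicateCol_mulVec,
        Matrix.mulVec_smul, Matrix.mulVec_smul, horth]
      simp
    have h21 : Matrix.replicateRow Unit (p⁻¹ • h) * M * V = 0 := by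
      have e : Matrix.replicateRow Unit (p⁻¹ • h) * M * V = (Vᵀ * Mᵀ * Matrix.replicateCol Unit (p⁻¹ • h))ᵀ := by
        rw [Matrix.transpose_mul, Matrix.transpose_mul, Matrix.transpose_replicateCol,
          Matrix.transpose_transpose, Matrix.transpose_transpose, Matrix.mul_assoc]
      rw [e, hMt, h12, Matrix.transpose_zero]
    have h22 : Matrix.replicateRow Unit (p⁻¹ • h) * M * Matrix.replicateCol Unit (p⁻¹ • h) = 1 := by
      rw [Matrix.mul_assoc, ← Matrix.replicateCol_mulVec, Matrix.replicateRow_mul_replicateCol]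
      ext i j
      simp [Matrix.mulVec_smul, hhMh, Matrix.one_apply]
      field_simp
    rw [hV, h12, h21, h22, Matrix.fromBlocks_one]
  -- Dnew-orthonormality of B
  have hscal : (Real.sqrt δ)⁻¹ * (δ * (Real.sqrt δ)⁻¹) = 1 := by
    rw [← hsd]; field_simp; rw [Real.sqrt_sq hsdpos.le]
  have hBDB : Bᵀ * Dnew * B = 1 := by
    rw [hBdef, hDnew, Matrix.fromBlocks_transpose, Matrix.fromBlocks_multiply,
      Matrix.fromBlocks_multiply]
    simp only [Matrix.transpose_zero, Matrix.transpose_smul, Matrix.transpose_one,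
      Matrix.mul_zero, Matrix.zero_mul, add_zero, zero_add, Matrix.smul_mul,
      Matrix.mul_smul, Matrix.one_mul, Matrix.mul_one, smul_smul, smul_zero, hW, hscal, one_smul]
    exact Matrix.fromBlocks_one
  -- the product A * Q
  have hvc : V *ᵥ (Vᵀ *ᵥ (M *ᵥ c)) + h = c := by
    rw [hh]; abel
  have hcol : V * Matrix.replicateCol Unit (Real.sqrt δ • (Vᵀ *ᵥ (M *ᵥ c))) +
      Matrix.replicateCol Unit (p⁻¹ • h) * ((Real.sqrt δ * p) • (1 : Matrix Unit Unit ℝ)) =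
      Matrix.replicateCol Unit (Real.sqrt δ • c) := by
    rw [Matrix.replicateCol_smul, Matrix.mul_smul, ← Matrix.replicateCol_mulVec, Matrix.mul_smul,
      Matrix.mul_one, Matrix.replicateCol_smul, smul_smul]
    have e : Real.sqrt δ * p * p⁻¹ = Real.sqrt δ := by field_simp
    rw [e, ← smul_add, ← Matrix.replicateCol_add, hvc, Matrix.replicateCol_smul]
  have hAQ : A * Q = Matrix.fromCols (V * S) (Matrix.replicateCol Unit (Real.sqrt δ • c)) := by
    rw [hQ, hAdef, Matrix.fromCols_mul_fromBlocks, Matrix.mul_zero, add_zero, hcol]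
  have hcol2 : Matrix.replicateCol Unit (Real.sqrt δ • c) * ((Real.sqrt δ)⁻¹ • (1 : Matrix Unit Unit ℝ)) =
      Matrix.replicateCol Unit c := by
    rw [Matrix.mul_smul, Matrix.mul_one, Matrix.replicateCol_smul, smul_smul,
      inv_mul_cancel₀ hsdpos.ne', one_smul]
  have hAQB : A * Q * Bᵀ = Matrix.fromCols (V * S * Wᵀ) (Matrix.replicateCol Unit c) := by
    rw [hAQ, hBdef, Matrix.fromBlocks_transpose, Matrix.fromCols_mul_fromBlocks]
    simp only [Matrix.transpose_zero, Matrix.transpose_smul, Matrix.transpose_one,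
      Matrix.mul_zero, add_zero, zero_add]
    rw [hcol2]
  have key : Vnew * SQ * Wnewᵀ = Matrix.fromCols (V * S * Wᵀ) (Matrix.replicateCol Unit c) := by
    rw [hVnew, show Wnew = B * WQ from hWnew, Matrix.transpose_mul]
    have e : A * VQ * SQ * (WQᵀ * Bᵀ) = A * Q * Bᵀ := by
      rw [hQsvd]; simp only [Matrix.mul_assoc]
    rw [e, hAQB]
  refine ⟨?_, ?_, ?_⟩
  · rw [hUnew, hDnew, key, Matrix.fromCols_mul_fromBlocks,
      Matrix.fromCols_mul_fromBlocks]
    congr 1 <;> simp [hSVD]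
  · have e : Vnewᵀ * M * Vnew = VQᵀ * (Aᵀ * M * A) * VQ := by
      rw [hVnew, Matrix.transpose_mul]; simp only [Matrix.mul_assoc]
    rw [e, hAMA, Matrix.mul_one, hVQ]
  · have e : Wnewᵀ * Dnew * Wnew = WQᵀ * (Bᵀ * Dnew * B) * WQ := by
      rw [show Wnew = B * WQ from hWnew, Matrix.transpose_mul]; simp only [Matrix.mul_assoc]
    rw [e, hBDB, Matrix.mul_one, hWQ]
end

section
/- With the same setting (piecewise constant data u with coefficient matrix U, Gram matrix M, time-step matrix Δ, POD operator K with adjoint K* given by (K* x)(t) = (x, u(t))_X): if σ > 0, x = Σ_k v_k φ_k, and f = Σ_ℓ w_ℓ χ_ℓ, then K* x = σ f holds if and only if Uᵀ M v = σ Δ w, i.e., (UΔ)* v = σ w where (UΔ)* = Uᵀ M is the adjoint of UΔ : ℝ^s_Δ → ℝ^m_M. -/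
open MeasureTheory
open scoped Matrix

/-- part of Proposition 3.1: In the same setting (piecewise constant
data `u` with coefficient matrix `U`, Gram matrix `M`, time steps `δ_j`, POD adjoint
`(K* x)(t) = (x, u(t))_X`): for `σ > 0`, `x = Σ_k v_k φ_k`, `f = Σ_ℓ w_ℓ χ_ℓ`,
`K* x = σ f` (as elements of `L²(0,T)`, i.e. a.e. on `(0,T)`) holds iff
`(UΔ)* v = σ w`, where `(UΔ)* = Uᵀ M` is the adjoint of `UΔ : ℝ^s_Δ → ℝ^m_M`. -/
theorem pod_adjoint_eq_iff_matrix
    {X : Type*} [NormedAddCommGroup X] [InnerProductSpace ℝ X] [CompleteSpace X]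
    {m s : ℕ}
    (T : ℝ) (hT : 0 < T)
    (t : Fin (s + 1) → ℝ) (ht : StrictMono t)
    (ht0 : t 0 = 0) (htT : t (Fin.last s) = T)
    (δ : Fin s → ℝ) (hδ : ∀ j, δ j = t j.succ - t j.castSucc)
    (D : Matrix (Fin s) (Fin s) ℝ) (hD : D = Matrix.diagonal δ)
    (φ : Fin m → X) (hφ : LinearIndependent ℝ φ)
    (M : Matrix (Fin m) (Fin m) ℝ) (hM : ∀ j k, M j k = inner ℝ (φ j) (φ k))
    (U : Matrix (Fin m) (Fin s) ℝ)
    (χ : Fin s → ℝ → ℝ)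
    (hχ : ∀ j, χ j = Set.indicator (Set.Ioo (t j.castSucc) (t j.succ)) fun _ => (1 : ℝ))
    (u : ℝ → X)
    (hu : ∀ τ, u τ = ∑ j, χ j τ • (∑ k, U k j • φ k))
    (σ : ℝ) (hσ : 0 < σ)
    (w : Fin s → ℝ) (f : ℝ → ℝ) (hf : ∀ τ, f τ = ∑ ℓ, w ℓ * χ ℓ τ)
    (v : Fin m → ℝ) (x : X) (hx : x = ∑ k, v k • φ k) :
    ((fun τ => (inner ℝ x (u τ) : ℝ))
        =ᵐ[volume.restrict (Set.Ioo (0 : ℝ) T)] fun τ => σ * f τ) ↔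
      Uᵀ *ᵥ (M *ᵥ v) = σ • w := by

  have hδpos : ∀ j : Fin s, t j.castSucc < t j.succ := fun j =>
    ht (Fin.castSucc_lt_succ : j.castSucc < j.succ)
  have hsub : ∀ j : Fin s, Set.Ioo (t j.castSucc) (t j.succ) ⊆ Set.Ioo (0:ℝ) T := by
    intro j
    apply Set.Ioo_subset_Ioo
    · rw [← ht0]; exact ht.monotone (Fin.zero_le _)
    · rw [← htT]; exact ht.monotone (Fin.le_last _)
  have hχ_one : ∀ (j : Fin s) (τ : ℝ), τ ∈ Set.Ioo (t j.castSucc) (t j.succ) → χ j τ = 1 := by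
    intro j τ hτ; rw [hχ j]; exact Set.indicator_of_mem hτ _
  have hχ_zero : ∀ (j j' : Fin s) (τ : ℝ), j' ≠ j →
      τ ∈ Set.Ioo (t j.castSucc) (t j.succ) → χ j' τ = 0 := by
    intro j j' τ hne hτ
    rw [hχ j']
    apply Set.indicator_of_notMem
    intro hτ'
    rcases lt_or_gt_of_ne hne with h | h
    · have hle : t j'.succ ≤ t j.castSucc := by
        apply ht.monotone
        have : (j' : ℕ) < j := h
        rw [Fin.le_def]
        simpa using this
      have h1 := hτ'.2
      have h2 := hτ.1
      linarith
    · have hle : t j.succ ≤ t j'.castSucc := by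
        apply ht.monotone
        have : (j : ℕ) < j' := h
        rw [Fin.le_def]
        simpa using this
      have h1 := hτ.2
      have h2 := hτ'.1
      linarith
  have key : ∀ τ, (inner ℝ x (u τ) : ℝ) = ∑ j, χ j τ * (Uᵀ *ᵥ (M *ᵥ v)) j := by
    intro τ
    rw [hx, hu τ, inner_sum]
    refine Finset.sum_congr rfl fun j _ => ?_
    rw [real_inner_smul_right]
    congr 1
    have hval : (Uᵀ *ᵥ (M *ᵥ v)) j = ∑ k, U k j * ∑ l, M k l * v l := by
      simp [Matrix.mulVec, dotProduct, Matrix.transpose_apply]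
    rw [hval, inner_sum]
    refine Finset.sum_congr rfl fun k _ => ?_
    rw [real_inner_smul_right, sum_inner]
    congr 1
    refine Finset.sum_congr rfl fun l _ => ?_
    rw [real_inner_smul_left, hM, real_inner_comm]
    ring
  have keyf : ∀ τ, σ * f τ = ∑ j, χ j τ * (σ • w) j := by
    intro τ
    rw [hf τ, Finset.mul_sum]
    refine Finset.sum_congr rfl fun j _ => ?_
    simp only [Pi.smul_apply, smul_eq_mul]
    ring
  constructor
  · intro h
    funext j
    set I := Set.Ioo (t j.castSucc) (t j.succ) with hI
    have hne : volume.restrict I ≠ 0 := by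
      simp only [ne_eq, Measure.restrict_eq_zero, hI, Real.volume_Ioo]
      simp only [ne_eq, ENNReal.ofReal_eq_zero, not_le]
      linarith [hδpos j]
    haveI : (ae (volume.restrict I)).NeBot := ae_neBot.mpr hne
    have h' : (fun τ => (inner ℝ x (u τ) : ℝ)) =ᵐ[volume.restrict I] fun τ => σ * f τ :=
      h.filter_mono (ae_mono (Measure.restrict_mono (hsub j) le_rfl))
    obtain ⟨τ, heq, hτ⟩ := (h'.and (ae_restrict_mem measurableSet_Ioo)).exists
    have h1 : (inner ℝ x (u τ) : ℝ) = (Uᵀ *ᵥ (M *ᵥ v)) j := by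
      rw [key τ, Finset.sum_eq_single j]
      · rw [hχ_one j τ hτ]; ring
      · intro j' _ hne'
        rw [hχ_zero j j' τ hne' hτ]; ring
      · simp
    have h2 : σ * f τ = (σ • w) j := by
      rw [keyf τ, Finset.sum_eq_single j]
      · rw [hχ_one j τ hτ]; ring
      · intro j' _ hne'
        rw [hχ_zero j j' τ hne' hτ]; ring
      · simp
    rw [← h1, ← h2]
    exact heq
  · intro h
    apply Filter.EventuallyEq.of_eq
    funext τ
    rw [key τ, keyf τ, h]
end
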